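/- Let n, k be odd coprime positive integers with n > k, and define rᵢ, sᵢ, tᵢ (1 ≤ i ≤ d-1) as the Riemenschneider-type series from the Hirzebruch-Jung expansion of 2n/(n+k), so that r₁ > r₂ > ⋯ > r_{d-1} = 0 and 2rᵢ + n·sᵢ = k·tᵢ for all i. Then for every triple of integers (r,s,t) with 2r + ns = kt, 0 ≤ r < 2k and s,t ≥ 1, there exist non-negative integers c₁,…,c_{d-1} such that r = Σ cᵢrᵢ, s = Σ cᵢsᵢ, and t = Σ cᵢtᵢ. -/

import Mathlib

/-- Evaluation of a Hirzebruch–Jung continued fraction `[a₁, …, a_m]`, i.e.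
`a₁ - 1/(a₂ - 1/(⋯ - 1/a_m))`. (Note `1/0 = 0` in `ℚ`, so `hjEval [a] = a`.) -/
def hjEval : List ℤ → ℚ
  | [] => 0
  | a :: l => (a : ℚ) - 1 / hjEval l

namespace HJAux

def hjP : List ℤ → ℤ × ℤ
  | [] => (1, 0)
  | a :: l => (a * (hjP l).1 - (hjP l).2, (hjP l).1)

lemma hjP_cons (a : ℤ) (l : List ℤ) :
    hjP (a :: l) = (a * (hjP l).1 - (hjP l).2, (hjP l).1) := rfl

lemma hjP_main : ∀ l : List ℤ, (∀ a ∈ l, 2 ≤ a) →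
    0 ≤ (hjP l).2 ∧ (hjP l).2 < (hjP l).1 ∧ IsCoprime (hjP l).1 (hjP l).2 ∧
      hjEval l = ((hjP l).1 : ℚ) / ((hjP l).2 : ℚ)
  | [], _ => by
      refine ⟨le_refl _, by norm_num [hjP], isCoprime_one_left, by norm_num [hjP, hjEval]⟩
  | a :: l, h => by
      obtain ⟨h0, h1, h2, h3⟩ := hjP_main l (fun b hb => h b (List.mem_cons_of_mem a hb))
      have ha : 2 ≤ a := h a List.mem_cons_self
      set N := (hjP l).1 with hN
      set D := (hjP l).2 with hD
      have hN1 : 1 ≤ N := by omega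
      refine ⟨?_, ?_, ?_, ?_⟩
      · simp only [hjP_cons]; omega
      · simp only [hjP_cons]; nlinarith
      · simp only [hjP_cons]
        have h' : IsCoprime (-D + N * a) N := (h2.symm.neg_left).add_mul_left_left a
        have he : a * N - D = -D + N * a := by ring
        rw [he]; exact h'
      · simp only [hjP_cons]
        have hNQ : ((N : ℚ)) ≠ 0 := by exact_mod_cast (by omega : N ≠ 0)
        rw [hjEval, h3, one_div_div]
        push_cast
        field_simp
        rw [← hN, ← hD, mul_div_cancel_left₀ _ hNQ]

lemma hj_gt_one : ∀ l : List ℤ, l ≠ [] → (∀ a ∈ l, 2 ≤ a) → 1 < hjEval l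
  | [], h, _ => absurd rfl h
  | a :: l, _, h => by
      have ha : 2 ≤ a := h a List.mem_cons_self
      rcases eq_or_ne l [] with rfl | hl
      · have : (2 : ℚ) ≤ (a : ℚ) := by exact_mod_cast ha
        norm_num [hjEval]
        linarith
      · have hx : 1 < hjEval l := hj_gt_one l hl (fun b hb => h b (List.mem_cons_of_mem a hb))
        have h1 : 1 / hjEval l < 1 := by
          rw [div_lt_one (by linarith)]; linarith
        have h2 : 0 < 1 / hjEval l := by positivity
        have : (2 : ℚ) ≤ (a : ℚ) := by exact_mod_cast ha
        rw [hjEval]; linarith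

lemma hj_le_head (a : ℤ) (l : List ℤ) (h : ∀ b ∈ l, 2 ≤ b) :
    hjEval (a :: l) ≤ (a : ℚ) := by
  rcases eq_or_ne l [] with rfl | hl
  · norm_num [hjEval]
  · have hx : 1 < hjEval l := hj_gt_one l hl h
    have h2 : 0 < 1 / hjEval l := by positivity
    rw [hjEval]; linarith

lemma hjP_append : ∀ (l : List ℤ) (a b : ℤ),
    (hjP (l ++ [a, b])).1 = b * (hjP (l ++ [a])).1 - (hjP l).1 ∧
    (hjP (l ++ [a, b])).2 = b * (hjP (l ++ [a])).2 - (hjP l).2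
  | [], a, b => by constructor <;> simp [hjP] <;> try ring
  | c :: l, a, b => by
      obtain ⟨ih1, ih2⟩ := hjP_append l a b
      constructor
      · simp only [List.cons_append, hjP_cons, ih1, ih2]; ring
      · simp only [List.cons_append, hjP_cons, ih1, ih2]

def hjNum (γ : ℕ → ℤ) (i : ℕ) : ℤ := (hjP ((List.range i).map (fun j => γ (j + 1)))).1
def hjDen (γ : ℕ → ℤ) (i : ℕ) : ℤ := (hjP ((List.range i).map (fun j => γ (j + 1)))).2

lemma hjNum_zero (γ : ℕ → ℤ) : hjNum γ 0 = 1 := rfl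
lemma hjDen_zero (γ : ℕ → ℤ) : hjDen γ 0 = 0 := rfl
lemma hjNum_one (γ : ℕ → ℤ) : hjNum γ 1 = γ 1 := by
  simp [hjNum, List.range_succ, hjP]
lemma hjDen_one (γ : ℕ → ℤ) : hjDen γ 1 = 1 := by
  simp [hjDen, List.range_succ, hjP]

lemma range_map_split (γ : ℕ → ℤ) (i : ℕ) :
    (List.range (i + 2)).map (fun j => γ (j + 1)) =
      (List.range i).map (fun j => γ (j + 1)) ++ [γ (i + 1), γ (i + 2)] := by
  rw [show i + 2 = (i + 1) + 1 from rfl, List.range_succ, List.range_succ]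
  simp

lemma hjNum_rec (γ : ℕ → ℤ) (i : ℕ) :
    hjNum γ (i + 2) = γ (i + 2) * hjNum γ (i + 1) - hjNum γ i := by
  have h1 := range_map_split γ i
  have h2 : (List.range (i + 1)).map (fun j => γ (j + 1)) =
      (List.range i).map (fun j => γ (j + 1)) ++ [γ (i + 1)] := by
    rw [List.range_succ]; simp
  rw [hjNum, hjNum, hjNum, h1, h2]
  exact (hjP_append _ _ _).1

lemma hjDen_rec (γ : ℕ → ℤ) (i : ℕ) :
    hjDen γ (i + 2) = γ (i + 2) * hjDen γ (i + 1) - hjDen γ i := by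
  have h1 := range_map_split γ i
  have h2 : (List.range (i + 1)).map (fun j => γ (j + 1)) =
      (List.range i).map (fun j => γ (j + 1)) ++ [γ (i + 1)] := by
    rw [List.range_succ]; simp
  rw [hjDen, hjDen, hjDen, h1, h2]
  exact (hjP_append _ _ _).2

end HJAux

set_option maxHeartbeats 1000000

/-- With the Riemenschneider-type series `rᵢ, sᵢ, tᵢ` (for `1 ≤ i ≤ d-1`) built from the
Hirzebruch–Jung expansion of `2n/(n+k)` (`n > k` odd and coprime), every integer triple
`(r, s, t)` with `2r + ns = kt`, `0 ≤ r < 2k`, `s, t ≥ 1` is a non-negative integral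
combination: `r = Σ cᵢ rᵢ`, `s = Σ cᵢ sᵢ`, `t = Σ cᵢ tᵢ` for some `cᵢ ∈ ℕ`. -/
theorem hj_triples_decomposition (n k : ℕ) (hn : Odd n) (hk : Odd k)
    (hcop : Nat.Coprime n k) (hkn : k < n) (hk0 : 0 < k)
    (d : ℕ) (hd : 2 ≤ d) (γ : ℕ → ℤ)
    (hγval : hjEval ((List.range (d - 1)).map (fun i => γ (i + 1))) = (2 * n : ℚ) / (n + k))
    (hγ1 : 1 ≤ γ 1) (hγi : ∀ i, 2 ≤ i → i ≤ d - 1 → 2 ≤ γ i)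
    (β s t r : ℕ → ℤ)
    (hβ : ∀ i, β i = if i = 3 then γ 3 + 1 else γ i)
    (hs1 : s 1 = 1) (hs2 : s 2 = 1)
    (ht1 : t 1 = 2 * β 2 + 1) (ht2 : t 2 = 2 * β 2 - 1)
    (hsrec : ∀ i, 3 ≤ i → i ≤ d - 1 → s i = β i * s (i - 1) - s (i - 2))
    (htrec : ∀ i, 3 ≤ i → i ≤ d - 1 → t i = β i * t (i - 1) - t (i - 2))
    (hr : ∀ i, 1 ≤ i → i ≤ d - 1 → 2 * r i = k * t i - n * s i) :
    ∀ R S T : ℤ, 2 * R + n * S = k * T → 0 ≤ R → R < 2 * k → 1 ≤ S → 1 ≤ T →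
      ∃ c : ℕ → ℕ,
        R = ∑ i ∈ Finset.Icc 1 (d - 1), (c i : ℤ) * r i ∧
        S = ∑ i ∈ Finset.Icc 1 (d - 1), (c i : ℤ) * s i ∧
        T = ∑ i ∈ Finset.Icc 1 (d - 1), (c i : ℤ) * t i := by
  intro R S T hRST hR0 hR2k hS hT
  obtain ⟨b0, hb0⟩ := hn
  obtain ⟨a0, ha0⟩ := hk
  have hnZ : (n : ℤ) = 2 * b0 + 1 := by exact_mod_cast hb0
  have hkZ : (k : ℤ) = 2 * a0 + 1 := by exact_mod_cast ha0
  have hn0 : 0 < n := by omega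
  have hnQ : (0 : ℚ) < (n : ℚ) := by exact_mod_cast hn0
  have hkQ : (0 : ℚ) < (k : ℚ) := by exact_mod_cast hk0
  have hknQ : (k : ℚ) < (n : ℚ) := by exact_mod_cast hkn
  have hnkQ : (0 : ℚ) < (n : ℚ) + (k : ℚ) := by linarith
  have hV1 : (1 : ℚ) < (2 * n : ℚ) / ((n : ℚ) + k) := by
    rw [lt_div_iff₀ hnkQ]; linarith
  have hV2 : (2 * n : ℚ) / ((n : ℚ) + k) < 2 := by
    rw [div_lt_iff₀ hnkQ]; linarith
  -- d ≥ 3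
  have hd3 : 3 ≤ d := by
    by_contra hcon
    have hd2 : d = 2 := by omega
    subst hd2
    have hL : (List.range (2 - 1)).map (fun i => γ (i + 1)) = [γ 1] := by
      norm_num [List.range_succ]
    rw [hL] at hγval
    have hEv : hjEval [γ 1] = (γ 1 : ℚ) := by norm_num [hjEval]
    rw [hEv] at hγval
    have h1 : (1 : ℚ) < (γ 1 : ℚ) := by rw [hγval]; exact hV1
    have h2 : (γ 1 : ℚ) < 2 := by rw [hγval]; exact hV2
    have h1' : (1 : ℤ) < γ 1 := by exact_mod_cast h1
    have h2' : γ 1 < 2 := by exact_mod_cast h2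
    omega
  obtain ⟨m, hm⟩ : ∃ m, d - 1 = m + 2 := ⟨d - 3, by omega⟩
  rw [hm] at hγval hγi hsrec htrec hr ⊢
  have hγ2 : 2 ≤ γ 2 := hγi 2 le_rfl (by omega)
  have hβ2 : β 2 = γ 2 := by rw [hβ]; norm_num
  have hβ3 : β 3 = γ 3 + 1 := by rw [hβ]; norm_num
  -- decompose the list
  have hList : (List.range (m + 2)).map (fun i => γ (i + 1)) =
      γ 1 :: γ 2 :: (List.range m).map (fun i => γ (i + 3)) := by
    rw [show m + 2 = (m + 1) + 1 from rfl, List.range_succ_eq_map,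
      List.range_succ_eq_map]
    simp only [List.map_cons, List.map_map]
    refine congrArg _ (congrArg _ ?_)
    refine List.map_congr_left (fun i _ => ?_)
    simp only [Function.comp]
    try exact congrArg γ (by omega)
  have hTail2 : ∀ z ∈ (List.range m).map (fun i => γ (i + 3)), 2 ≤ z := by
    intro z hz
    obtain ⟨i, hi, rfl⟩ := List.mem_map.mp hz
    have hi' : i < m := List.mem_range.mp hi
    exact hγi (i + 3) (by omega) (by omega)
  have hTail2' : ∀ z ∈ γ 2 :: (List.range m).map (fun i => γ (i + 3)), 2 ≤ z := by
    intro z hz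
    rcases List.mem_cons.mp hz with rfl | hz'
    · exact hγ2
    · exact hTail2 z hz'
  rw [hList] at hγval
  -- tail value
  have hx2 : 1 < hjEval (γ 2 :: (List.range m).map (fun i => γ (i + 3))) :=
    HJAux.hj_gt_one _ (by simp) hTail2'
  have hγval' : (γ 1 : ℚ) - 1 / hjEval (γ 2 :: (List.range m).map (fun i => γ (i + 3)))
      = (2 * n : ℚ) / ((n : ℚ) + k) := by
    rw [← hγval]; rfl
  -- γ 1 = 2
  have hγ1eq : γ 1 = 2 := by
    set x := hjEval (γ 2 :: (List.range m).map (fun i => γ (i + 3))) with hxdef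
    have h1 : 1 / x < 1 := by rw [div_lt_one (by linarith)]; linarith
    have h2 : 0 < 1 / x := by positivity
    have hlow : (1 : ℚ) < (γ 1 : ℚ) := by linarith
    have hhigh : (γ 1 : ℚ) < 3 := by linarith
    have hlow' : (1 : ℤ) < γ 1 := by exact_mod_cast hlow
    have hhigh' : γ 1 < 3 := by exact_mod_cast hhigh
    omega
  -- 2kγ₂ ≥ n+k
  have hγ2k : (n : ℤ) + k ≤ 2 * k * γ 2 := by
    set x := hjEval (γ 2 :: (List.range m).map (fun i => γ (i + 3))) with hxdef
    have hxpos : 0 < x := by linarith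
    have hxne : x ≠ 0 := ne_of_gt hxpos
    have hkey : 2 * (k : ℚ) * x = (n : ℚ) + k := by
      rw [hγ1eq] at hγval'
      push_cast at hγval'
      field_simp at hγval'
      linarith
    have hle : x ≤ (γ 2 : ℚ) := HJAux.hj_le_head (γ 2) _ hTail2
    have hmul := mul_le_mul_of_nonneg_left hle (by positivity : (0:ℚ) ≤ 2 * (k:ℚ))
    have : (n : ℚ) + k ≤ 2 * k * (γ 2 : ℚ) := by linarith
    exact_mod_cast this
  -- continuant values at the end
  have hAll2 : ∀ z ∈ (List.range (m + 2)).map (fun i => γ (i + 1)), 2 ≤ z := by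
    rw [hList]
    intro z hz
    rcases List.mem_cons.mp hz with rfl | hz'
    · omega
    · exact hTail2' z hz'
  obtain ⟨hD0, hDN, hNDcop, hEvND⟩ := HJAux.hjP_main _ hAll2
  rw [hList] at hEvND
  rw [hγval] at hEvND
  set N := HJAux.hjNum γ (m + 2) with hNdef
  set D := HJAux.hjDen γ (m + 2) with hDdef
  have hN' : (HJAux.hjP ((List.range (m + 2)).map (fun i => γ (i + 1)))).1 = N := rfl
  have hD' : (HJAux.hjP ((List.range (m + 2)).map (fun i => γ (i + 1)))).2 = D := rfl
  rw [hList] at hN' hD' hD0 hDN hNDcop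
  rw [hN'] at hDN hNDcop hEvND
  rw [hD'] at hD0 hDN hNDcop hEvND
  have hDpos : 0 < D := by
    rcases lt_or_eq_of_le hD0 with h | h
    · exact h
    · exfalso
      rw [← h] at hEvND
      norm_num at hEvND
      rcases hEvND with h' | h'
      · omega
      · linarith
  have hNpos : 0 < N := lt_of_le_of_lt hD0 hDN
  have hDQ : ((D : ℚ)) ≠ 0 := by exact_mod_cast ne_of_gt hDpos
  have hcross0 : (2 * n : ℚ) * (D : ℚ) = (N : ℚ) * ((n : ℚ) + k) := by
    rw [div_eq_div_iff (ne_of_gt hnkQ) hDQ] at hEvND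
    linarith [hEvND]
  have hNDZ : 2 * (n : ℤ) * D = N * ((n : ℤ) + k) := by exact_mod_cast hcross0
  set M : ℤ := (a0 : ℤ) + b0 + 1 with hMdef
  have h2M : (n : ℤ) + k = 2 * M := by omega
  have hNM : N * M = (n : ℤ) * D := by
    have : 2 * (N * M) = 2 * ((n : ℤ) * D) := by rw [h2M] at hNDZ; linarith
    linarith
  have hcopnM : IsCoprime (n : ℤ) M := by
    have h1 : IsCoprime (n : ℤ) (k : ℤ) := by
      rw [Int.isCoprime_iff_gcd_eq_one, Int.gcd_natCast_natCast]
      exact hcop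
    have h2 : IsCoprime (n : ℤ) ((k : ℤ) + (n : ℤ) * 1) := h1.add_mul_left_right 1
    have h3 : IsCoprime (n : ℤ) (2 * M) := by
      have he : (k : ℤ) + (n : ℤ) * 1 = 2 * M := by omega
      rwa [he] at h2
    exact h3.of_mul_right_right
  have hNdvd : N ∣ (n : ℤ) := by
    refine hNDcop.dvd_of_dvd_mul_right ?_
    exact ⟨M, by linarith [hNM]⟩
  have hndvd : (n : ℤ) ∣ N := by
    refine hcopnM.dvd_of_dvd_mul_right ?_
    exact ⟨D, by linarith [hNM]⟩
  have hNn : N = (n : ℤ) := Int.dvd_antisymm (le_of_lt hNpos) (by positivity) hNdvd hndvd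
  have hDM : D = M := by
    have hne : (n : ℤ) ≠ 0 := by omega
    rw [hNn] at hNM
    exact (mul_left_cancel₀ hne hNM).symm
  -- key identification: t i = Num, s i = 2 Den - Num
  have key2 : ∀ i, 2 ≤ i → i ≤ m + 2 →
      t i = HJAux.hjNum γ i ∧ s i = 2 * HJAux.hjDen γ i - HJAux.hjNum γ i := by
    intro i
    induction i using Nat.strong_induction_on with
    | _ i ih =>
      intro h2 hle
      match i, h2, hle, ih with
      | 2, _, _, _ => 
        have hN2 : HJAux.hjNum γ 2 = 2 * γ 2 - 1 := by
          have := HJAux.hjNum_rec γ 0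
          rw [HJAux.hjNum_one, HJAux.hjNum_zero, hγ1eq] at this
          norm_num at this ⊢
          rw [this]
          try ring
        have hD2 : HJAux.hjDen γ 2 = γ 2 := by
          have := HJAux.hjDen_rec γ 0
          rw [HJAux.hjDen_one, HJAux.hjDen_zero] at this
          norm_num at this ⊢
          rw [this]
          try ring
        constructor
        · rw [ht2, hβ2, hN2]
        · rw [hs2, hN2, hD2]; ring
      | 3, _, hle, _ =>
        have hN2 : HJAux.hjNum γ 2 = 2 * γ 2 - 1 := by
          have := HJAux.hjNum_rec γ 0
          rw [HJAux.hjNum_one, HJAux.hjNum_zero, hγ1eq] at this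
          norm_num at this ⊢
          rw [this]
          try ring
        have hD2 : HJAux.hjDen γ 2 = γ 2 := by
          have := HJAux.hjDen_rec γ 0
          rw [HJAux.hjDen_one, HJAux.hjDen_zero] at this
          norm_num at this ⊢
          rw [this]
          try ring
        have hN3 : HJAux.hjNum γ 3 = γ 3 * (2 * γ 2 - 1) - 2 := by
          have := HJAux.hjNum_rec γ 1
          rw [HJAux.hjNum_one, hγ1eq] at this
          norm_num at this ⊢
          rw [this, hN2]
        have hD3 : HJAux.hjDen γ 3 = γ 3 * γ 2 - 1 := by
          have := HJAux.hjDen_rec γ 1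
          rw [HJAux.hjDen_one] at this
          norm_num at this ⊢
          rw [this, hD2]
        have hs3 := hsrec 3 le_rfl hle
        have ht3 := htrec 3 le_rfl hle
        norm_num at hs3 ht3
        constructor
        · rw [ht3, hβ3, ht2, ht1, hβ2, hN3]; ring
        · rw [hs3, hβ3, hs2, hs1, hN3, hD3]; ring
      | (j + 4), _, hle, ih =>
        have ih1 := ih (j + 3) (by omega) (by omega) (by omega)
        have ih2 := ih (j + 2) (by omega) (by omega) (by omega)
        have hsr := hsrec (j + 4) (by omega) hle
        have htr := htrec (j + 4) (by omega) hle
        have hb : β (j + 4) = γ (j + 4) := by rw [hβ, if_neg (by omega : ¬(j + 4 = 3))]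
        have hNr := HJAux.hjNum_rec γ (j + 2)
        have hDr := HJAux.hjDen_rec γ (j + 2)
        have e1 : j + 4 - 1 = j + 3 := rfl
        have e2 : j + 4 - 2 = j + 2 := rfl
        rw [e1, e2, hb] at hsr htr
        have e3 : j + 2 + 2 = j + 4 := rfl
        have e4 : j + 2 + 1 = j + 3 := rfl
        rw [e3, e4] at hNr hDr
        constructor
        · rw [htr, ih1.1, ih2.1, hNr]
        · rw [hsr, ih1.2, ih2.2, hNr, hDr]; ring
  have hte : t (m + 2) = (n : ℤ) := by
    rw [(key2 (m + 2) (by omega) le_rfl).1, ← hNdef, hNn]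
  have hse : s (m + 2) = (k : ℤ) := by
    rw [(key2 (m + 2) (by omega) le_rfl).2, ← hNdef, ← hDdef, hNn, hDM]
    omega
  -- cross identity
  have hcross : ∀ i, 1 ≤ i → i + 1 ≤ m + 2 →
      t i * s (i + 1) - s i * t (i + 1) = 2 := by
    intro i hi
    induction i, hi using Nat.le_induction with
    | base =>
      intro _
      rw [ht1, ht2, hs1, hs2]; ring
    | succ i hi ih =>
      intro h2
      have hsr := hsrec (i + 2) (by omega) (by omega)
      have htr := htrec (i + 2) (by omega) (by omega)
      have e1 : i + 2 - 1 = i + 1 := rfl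
      have e2 : i + 2 - 2 = i := rfl
      rw [e1, e2] at hsr htr
      have ih' := ih (by omega)
      have e3 : i + 1 + 1 = i + 2 := rfl
      rw [e3, hsr, htr]
      linear_combination ih'
  -- parity
  have hpar : ∀ i, 1 ≤ i → i ≤ m + 2 → ∃ w, t i - s i = 2 * w := by
    intro i h1 h2
    refine ⟨r i - a0 * t i + b0 * s i, ?_⟩
    have hEq := hr i h1 h2
    linear_combination (-1 : ℤ) * hEq - t i * hkZ + s i * hnZ
  have hparST : ∃ w, T - S = 2 * w := by
    refine ⟨R - a0 * T + b0 * S, ?_⟩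
    linear_combination (-1 : ℤ) * hRST - T * hkZ + S * hnZ
  obtain ⟨w0, hw0⟩ := hparST
  have heven : ∀ i, 1 ≤ i → i ≤ m + 2 → ∃ w, S * t i - T * s i = 2 * w := by
    intro i h1 h2
    obtain ⟨w1, hw1⟩ := hpar i h1 h2
    exact ⟨S * w1 - w0 * s i, by linear_combination S * hw1 - s i * hw0⟩
  -- r 1 ≥ k
  have hr1 := hr 1 (by omega) (by omega)
  have hr1' : (k : ℤ) * t 1 = 2 * r 1 + n := by rw [hs1] at hr1; linarith
  have hr1k : (k : ℤ) ≤ r 1 := by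
    have h1 : (k : ℤ) * t 1 = 2 * k * γ 2 + k := by rw [ht1, hβ2]; ring
    have h2 : 2 * r 1 + (n : ℤ) = 2 * k * γ 2 + k := by rw [← hr1', h1]
    linarith
  -- a 1 ≥ 0
  have ha1 : 0 ≤ S * t 1 - T * s 1 := by
    by_contra hcon
    push_neg at hcon
    obtain ⟨w, hw⟩ := heven 1 (by omega) (by omega)
    have hwneg : w < 0 := by linarith
    have hwle : w ≤ -1 := by omega
    have hTlarge : S * t 1 + 2 ≤ T := by rw [hs1] at hw; linarith
    have e1 : (k : ℤ) * (S * t 1 + 2) ≤ k * T :=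
      mul_le_mul_of_nonneg_left hTlarge (by positivity)
    have e4 : (k : ℤ) ≤ S * r 1 := by
      calc (k : ℤ) ≤ r 1 := hr1k
      _ = 1 * r 1 := (one_mul _).symm
      _ ≤ S * r 1 := mul_le_mul_of_nonneg_right hS (by linarith)
    have e2 : (k : ℤ) * (S * t 1 + 2) = S * ((k : ℤ) * t 1) + 2 * k := by ring
    have e3 : S * ((k : ℤ) * t 1) = 2 * (S * r 1) + (n : ℤ) * S := by rw [hr1']; ring
    linarith
  -- find the transition index
  have hmain : ∃ g, 1 ≤ g ∧ g ≤ m + 1 ∧ 0 ≤ S * t g - T * s g ∧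
      S * t (g + 1) - T * s (g + 1) ≤ 0 := by
    refine ⟨Nat.findGreatest (fun i => 0 ≤ S * t i - T * s i) (m + 1),
      Nat.le_findGreatest (by omega) ha1,
      Nat.findGreatest_le _,
      Nat.findGreatest_spec (P := fun i => 0 ≤ S * t i - T * s i) (by omega : 1 ≤ m + 1) ha1,
      ?_⟩
    rcases lt_or_eq_of_le
        (Nat.findGreatest_le (P := fun i => 0 ≤ S * t i - T * s i) (m + 1)) with h | h
    · have hng := Nat.findGreatest_is_greatest (P := fun i => 0 ≤ S * t i - T * s i)
        (lt_add_one _) h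
      have hng' : ¬ (0 ≤ S * t (Nat.findGreatest (fun i => 0 ≤ S * t i - T * s i) (m + 1) + 1)
          - T * s (Nat.findGreatest (fun i => 0 ≤ S * t i - T * s i) (m + 1) + 1)) := by
        simpa using hng
      linarith [not_le.mp hng']
    · rw [h]
      have e : m + 1 + 1 = m + 2 := rfl
      rw [e, hte, hse]
      linarith
  obtain ⟨g, hg1, hgle, hgP, hnext⟩ := hmain
  obtain ⟨v, hv⟩ := heven g hg1 (by omega)
  obtain ⟨u, hu⟩ := heven (g + 1) (by omega) (by omega)
  have hv0 : 0 ≤ v := by linarith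
  have hu0 : u ≤ 0 := by linarith
  have hcg := hcross g hg1 (by omega)
  have hSsum : S = (-u) * s g + v * s (g + 1) := by
    have h2 : 2 * S = 2 * ((-u) * s g + v * s (g + 1)) := by
      linear_combination (-S) * hcg - s g * hu + s (g + 1) * hv
    linarith
  have hTsum : T = (-u) * t g + v * t (g + 1) := by
    have h2 : 2 * T = 2 * ((-u) * t g + v * t (g + 1)) := by
      linear_combination (-T) * hcg - t g * hu + t (g + 1) * hv
    linarith
  have hrg := hr g hg1 (by omega)
  have hrg1 := hr (g + 1) (by omega) (by omega)
  have hRsum : R = (-u) * r g + v * r (g + 1) := by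
    have h2 : 2 * R = 2 * ((-u) * r g + v * r (g + 1)) := by
      linear_combination hRST - (n : ℤ) * hSsum + (k : ℤ) * hTsum
        - (-u) * hrg - v * hrg1
    linarith
  refine ⟨fun j => if j = g then (-u).toNat else if j = g + 1 then v.toNat else 0, ?_, ?_, ?_⟩
  all_goals {
    have hgen : ∀ f : ℕ → ℤ,
        (∑ j ∈ Finset.Icc 1 (m + 2),
          ((if j = g then (-u).toNat else if j = g + 1 then v.toNat else 0 : ℕ) : ℤ) * f j)
        = (-u) * f g + v * f (g + 1) := by
      intro f
      have hgmem : g ∈ Finset.Icc 1 (m + 2) := Finset.mem_Icc.mpr ⟨hg1, by omega⟩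
      have hg1mem : g + 1 ∈ Finset.Icc 1 (m + 2) := Finset.mem_Icc.mpr ⟨by omega, by omega⟩
      have hpt : ∀ j ∈ Finset.Icc 1 (m + 2),
          ((if j = g then (-u).toNat else if j = g + 1 then v.toNat else 0 : ℕ) : ℤ) * f j
          = (if j = g then (-u) * f j else 0) + (if j = g + 1 then v * f j else 0) := by
        intro j _
        by_cases h1 : j = g
        · subst h1
          rw [if_pos rfl, if_pos rfl, if_neg (by omega)]
          rw [Int.toNat_of_nonneg (by linarith : (0:ℤ) ≤ -u)]
          ring
        · by_cases h2 : j = g + 1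
          · subst h2
            rw [if_neg h1, if_neg h1, if_pos rfl, if_pos rfl]
            rw [Int.toNat_of_nonneg hv0]
            ring
          · rw [if_neg h1, if_neg h1, if_neg h2, if_neg h2]
            norm_num
      rw [Finset.sum_congr rfl hpt, Finset.sum_add_distrib,
        Finset.sum_ite_eq' _ g (fun j => (-u) * f j),
        Finset.sum_ite_eq' _ (g + 1) (fun j => v * f j),
        if_pos hgmem, if_pos hg1mem]
    rw [hgen]
    first
      | exact hRsum
      | exact hSsum
      | exact hTsum
  }
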